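/- In an associative algebra with elements x_r^- (r ∈ ℤ) satisfying the relation x_r^- x_ℓ^- − q^{2} x_ℓ^- x_r^- = q^{2} x_{r−1}^- x_{ℓ+1}^- − x_{ℓ+1}^- x_{r−1}^- for all r, ℓ ∈ ℤ (the sl_2 loop relation with i = j), suppose w is a vector in a module such that x_r^- w ∈ ℂ x_0^- w for all r ∈ ℤ. Then the submodule spanned by all monomials x_{s_1}^- ··· x_{s_k}^- w (fixed k) equals the span of (x_0^-)^k w; i.e., every monomial of length k in the x_r^- applied to w is a scalar multiple of (x_0^-)^k w. -/

import Mathlib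

private lemma step14 (q : ℂ) (hq : q ≠ 0)
    (R : Type*) [Ring R] [Algebra ℂ R] (x : ℤ → R)
    (hrel : ∀ r ℓ : ℤ,
      x r * x ℓ - q ^ (-2 : ℤ) • (x ℓ * x r)
        = q ^ (-2 : ℤ) • (x (r - 1) * x (ℓ + 1)) - x (ℓ + 1) * x (r - 1))
    (M : Type*) [AddCommGroup M] [Module R M] (v : M)
    (hv : ∀ r : ℤ, ∃ c : ℂ, x r • v = algebraMap ℂ R c • (x 0 • v)) :
    ∀ r : ℤ, ∃ c : ℂ, x r • (x 0 • v) = algebraMap ℂ R c • (x 0 • (x 0 • v)) := by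
  letI : Module ℂ M := Module.compHom M (algebraMap ℂ R)
  have hsmul : ∀ (z : ℂ) (m : M), z • m = algebraMap ℂ R z • m := fun _ _ => rfl
  have hcomm : ∀ (z : ℂ) (r' : R) (m : M), r' • (z • m) = z • (r' • m) := by
    intro z r' m
    rw [hsmul, hsmul, ← mul_smul, ← mul_smul, Algebra.commutes]
  have hassoc : ∀ (z : ℂ) (r' : R) (m : M), (z • r') • m = z • (r' • m) := by
    intro z r' m
    rw [hsmul, Algebra.smul_def, mul_smul]
  set q2 : ℂ := q ^ (-2 : ℤ) with hq2def
  have hq2 : q2 ≠ 0 := zpow_ne_zero _ hq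
  set u : M := x 0 • v with hu
  choose c0 hc0 using hv
  set d : ℤ → ℂ := fun r => if r = 0 then 1 else c0 r with hdd
  have hd0 : d 0 = 1 := by rw [hdd]; simp
  have hd : ∀ r : ℤ, x r • v = d r • u := by
    intro r
    by_cases h : r = 0
    · subst h; rw [hd0, one_smul, hu]
    · rw [hdd]; simp only [if_neg h]; rw [hsmul]; exact hc0 r
  have hM : ∀ r ℓ : ℤ, x r • (x ℓ • v) - q2 • (x ℓ • (x r • v))
      = q2 • (x (r-1) • (x (ℓ+1) • v)) - x (ℓ+1) • (x (r-1) • v) := by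
    intro r ℓ
    have h := congrArg (fun y : R => y • v) (hrel r ℓ)
    simpa only [sub_smul, mul_smul, hassoc] using h
  have hstar : ∀ r ℓ : ℤ,
      d ℓ • (x r • u) - (q2 * d r) • (x ℓ • u)
        = (q2 * d (ℓ+1)) • (x (r-1) • u) - d (r-1) • (x (ℓ+1) • u) := by
    intro r ℓ
    have h := hM r ℓ
    simp only [hd, hcomm, smul_smul] at h
    exact h
  have inv_cancel : ∀ (t : ℂ) (m m' : M), t ≠ 0 → t • m = m' → m = t⁻¹ • m' := by
    intro t m m' ht h
    rw [← h, inv_smul_smul₀ ht]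
  have hA1 : x 1 • u = (q2 * d 1) • (x 0 • u) := by
    have h := hstar 1 0
    norm_num [hd0] at h
    set A1 := x 1 • u
    set A0 := x 0 • u
    clear_value A1 A0
    linear_combination (norm := module) ((2:ℂ)⁻¹ : ℂ) • h
  by_cases hd1 : d 1 = 0
  · intro r
    refine ⟨q2 * d r, ?_⟩
    rw [← hsmul]
    have h := hstar r 0
    norm_num [hd0, hd1] at h
    rw [hd1] at hA1
    set Ar := x r • u
    set A0 := x 0 • u
    set A1 := x 1 • u
    set Ar1 := x (r-1) • u
    clear_value Ar A0 A1 Ar1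
    linear_combination (norm := module) h - (d (r-1) : ℂ) • hA1
  · have ht : q2 * d 1 ≠ 0 := mul_ne_zero hq2 hd1
    have hAm1 : x (-1) • u
        = ((q2 * d 1)⁻¹ * ((q2 * d 1) * d (-1) - (q2 - 1))) • (x 0 • u) := by
      have h := hstar 1 (-1)
      norm_num [hd0] at h
      rw [mul_smul]
      apply inv_cancel _ _ _ ht
      set Am1 := x (-1) • u
      set A1 := x 1 • u
      set A0 := x 0 • u
      clear_value Am1 A1 A0
      linear_combination (norm := module) (d (-1) : ℂ) • hA1 - h
    intro r
    induction r using Int.induction_on with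
    | zero => exact ⟨1, by rw [map_one, one_smul]⟩
    | succ n ih =>
      obtain ⟨cn, hcn⟩ := ih
      rw [← hsmul] at hcn
      refine ⟨q2 * d ((n:ℤ)+1) + q2 * d 1 * cn - d (n:ℤ) * (q2 * d 1), ?_⟩
      rw [← hsmul]
      have h := hstar ((n:ℤ)+1) 0
      simp only [add_sub_cancel_right, zero_add, hd0] at h
      set An1 := x ((n:ℤ)+1) • u
      set An := x (n:ℤ) • u
      set A1 := x 1 • u
      set A0 := x 0 • u
      clear_value An1 An A1 A0
      linear_combination (norm := module) h + (q2 * d 1 : ℂ) • hcn - (d (n:ℤ) : ℂ) • hA1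
    | pred n ih =>
      obtain ⟨cn, hcn⟩ := ih
      rw [← hsmul] at hcn
      refine ⟨q2⁻¹ * (d (-1) * cn
        - (q2 * d (-(n:ℤ))) * ((q2 * d 1)⁻¹ * ((q2 * d 1) * d (-1) - (q2 - 1)))
        + d (-(n:ℤ)-1)), ?_⟩
      rw [← hsmul, mul_smul]
      apply inv_cancel _ _ _ hq2
      have h := hstar (-(n:ℤ)) (-1)
      norm_num [hd0] at h
      set Bn := x (-(n:ℤ)) • u
      set Bm1 := x (-1) • u
      set Bn1 := x (-(n:ℤ)-1) • u
      set A0 := x 0 • u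
      clear_value Bn Bm1 Bn1 A0
      linear_combination (norm := module) (d (-1) : ℂ) • hcn
        - (q2 * d (-(n:ℤ)) : ℂ) • hAm1 - h

/-- in an associative `ℂ`-algebra with elements `x_r` (`r ∈ ℤ`)
satisfying the `sl₂` loop relation
`x_r x_ℓ − q^{−2} x_ℓ x_r = q^{−2} x_{r−1} x_{ℓ+1} − x_{ℓ+1} x_{r−1}`,
if `w` is a vector of a module with `x_r • w ∈ ℂ (x_0 • w)` for all `r`, then
every length-`k` monomial `x_{s_1} ⋯ x_{s_k} • w` is a scalar multiple of
`x_0^k • w`. -/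
theorem stmt_14 (q : ℂ) (hq : q ≠ 0) (hroot : ∀ n : ℕ, 0 < n → q ^ n ≠ 1)
    (R : Type*) [Ring R] [Algebra ℂ R] (x : ℤ → R)
    (hrel : ∀ r ℓ : ℤ,
      x r * x ℓ - q ^ (-2 : ℤ) • (x ℓ * x r)
        = q ^ (-2 : ℤ) • (x (r - 1) * x (ℓ + 1)) - x (ℓ + 1) * x (r - 1))
    (M : Type*) [AddCommGroup M] [Module R M]
    (w : M)
    (hw : ∀ r : ℤ, ∃ c : ℂ, x r • w = algebraMap ℂ R c • (x 0 • w)) :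
    ∀ (k : ℕ) (s : Fin k → ℤ), ∃ c : ℂ,
      (List.ofFn fun i => x (s i)).prod • w = algebraMap ℂ R c • ((x 0) ^ k • w) := by
  have hcomm2 : ∀ (z : ℂ) (r' : R) (m : M),
      r' • (algebraMap ℂ R z • m) = algebraMap ℂ R z • (r' • m) := by
    intro z r' m
    rw [← mul_smul, ← mul_smul, Algebra.commutes]
  have key : ∀ (m : ℕ) (z : M), x 0 ^ (m+1) • z = x 0 • (x 0 ^ m • z) := by
    intro m z
    rw [pow_succ', mul_smul]
  have hP : ∀ (m : ℕ) (r : ℤ), ∃ c : ℂ,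
      x r • (x 0 ^ m • w) = algebraMap ℂ R c • (x 0 ^ (m+1) • w) := by
    intro m
    induction m with
    | zero => simpa using hw
    | succ m ih =>
      intro r
      obtain ⟨c, hc⟩ := step14 q hq R x hrel M (x 0 ^ m • w)
        (fun r' => (ih r').imp (fun c h => by simp only [key] at h; exact h)) r
      refine ⟨c, ?_⟩
      simp only [key]
      exact hc
  intro k
  induction k with
  | zero => intro s; exact ⟨1, by simp⟩
  | succ k ih =>
    intro s
    obtain ⟨c, hc⟩ := ih (fun i => s i.succ)
    obtain ⟨c', hc'⟩ := hP k (s 0)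
    refine ⟨c * c', ?_⟩
    rw [List.ofFn_succ, List.prod_cons, mul_smul, hc, hcomm2, hc', ← mul_smul, ← map_mul]
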